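/- Let G be a quasi-acyclic 2-path-bounded oriented graph without multiple edges and without triangles. Then ν(G) ≥ 𝔯𝔥(G). -/

import Mathlib

/-- An oriented graph: finite nonempty sets of vertices and edges with
origin and tail maps. -/
structure OrientedGraph where
  V : Type
  E : Type
  [fintypeV : Fintype V]
  [fintypeE : Fintype E]
  [nonemptyV : Nonempty V]
  [nonemptyE : Nonempty E]
  o : E → V
  t : E → V

attribute [instance] OrientedGraph.fintypeV OrientedGraph.fintypeE
  OrientedGraph.nonemptyV OrientedGraph.nonemptyE

namespace OrientedGraph

variable (G : OrientedGraph)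

/-- `G.IsPath p u v` : the edge sequence `p` is a path from `u` to `v`
(consecutive edges are composable; paths of length 0 at any vertex are allowed). -/
def IsPath (p : List G.E) (u v : G.V) : Prop :=
  List.Chain' (fun e f => G.t e = G.o f) p ∧
  ((p = [] ∧ u = v) ∨
    ∃ h : p ≠ [], u = G.o (p.head h) ∧ v = G.t (p.getLast h))

/-- The label of an edge sequence: the product of the labels of its edges
(the empty sequence maps to `1`). -/
def labelProd {M : Type} [Monoid M] (l : G.E → M) (s : List G.E) : M :=
  (s.map l).prod

/-- The diagram `(G, l)` is commutative: any two paths with the same origin and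
the same tail have equal labels. -/
def IsCommutative {M : Type} [Monoid M] (l : G.E → M) : Prop :=
  ∀ (u v : G.V) (p₁ p₂ : List G.E),
    G.IsPath p₁ u v → G.IsPath p₂ u v → G.labelProd l p₁ = G.labelProd l p₂

/-- A complete system of relations for `G`: for every monoid `M` and every
labeling `l : E → M`, the diagram `(G, l)` is commutative iff all relations hold. -/
def IsComplete (R : Finset (List G.E × List G.E)) : Prop :=
  ∀ (M : Type) [Monoid M], ∀ l : G.E → M,
    G.IsCommutative l ↔ ∀ r ∈ R, G.labelProd l r.1 = G.labelProd l r.2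

/-- A minimal complete system of relations: no proper subset is complete. -/
def IsMinimalComplete (R : Finset (List G.E × List G.E)) : Prop :=
  G.IsComplete R ∧ ∀ R' : Finset (List G.E × List G.E), R' ⊂ R → ¬ G.IsComplete R'

/-- The commutativity rank `η(G)`: the minimal cardinality of a complete
system of relations for `G`. -/
noncomputable def eta : ℕ :=
  sInf {n : ℕ | ∃ R : Finset (List G.E × List G.E), G.IsComplete R ∧ R.card = n}

/-- `S'` is obtained from `S` by one multiplication. -/
def MulStep (S S' : Set (List G.E)) : Prop :=
  ∃ s ∈ S, ∃ s' ∈ S, S' = S ∪ {s ++ s'}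

/-- `G.mCost S S'` : the minimal number of multiplications needed to obtain `S'`
from `S` (`⊤` if impossible). -/
noncomputable def mCost (S S' : Set (List G.E)) : ℕ∞ :=
  sInf {k : ℕ∞ | ∃ n : ℕ, k = n ∧ ∃ f : ℕ → Set (List G.E),
    f 0 = S ∧ f n = S' ∧ ∀ i < n, G.MulStep (f i) (f (i + 1))}

/-- `S_R`: the set of all edge sequences appearing in the relations of `R`. -/
def relSet (R : Finset (List G.E × List G.E)) : Set (List G.E) :=
  {s | ∃ r ∈ R, s = r.1 ∨ s = r.2}

/-- `ℰ`: the empty sequence together with all one-edge sequences. -/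
def baseSet : Set (List G.E) :=
  {s | s = [] ∨ ∃ e : G.E, s = [e]}

/-- `m(R)`: the minimal number of multiplications needed to build all sequences
appearing in `R`, starting from `ℰ`. -/
noncomputable def mRel (R : Finset (List G.E × List G.E)) : ℕ∞ :=
  sInf {k : ℕ∞ | ∃ S : Set (List G.E), G.relSet R ⊆ S ∧ k = G.mCost G.baseSet S}

/-- The multiplication rank `ν(G)`. -/
noncomputable def nu : ℕ∞ :=
  sInf {k : ℕ∞ | ∃ R : Finset (List G.E × List G.E), G.IsComplete R ∧ k = G.mRel R}

/-- A 4-tuple of edges `(a, b, c, d)` forms a rhomboid. -/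
def IsRhomboid (r : G.E × G.E × G.E × G.E) : Prop :=
  G.o r.1 = G.o r.2.2.1 ∧ G.t r.2.1 = G.t r.2.2.2 ∧
  G.t r.1 = G.o r.2.1 ∧ G.t r.2.2.1 = G.o r.2.2.2 ∧
  G.o r.1 ≠ G.t r.1 ∧ G.o r.1 ≠ G.o r.2.2.2 ∧ G.o r.1 ≠ G.t r.2.2.2 ∧
  G.t r.1 ≠ G.o r.2.2.2 ∧ G.t r.1 ≠ G.t r.2.2.2 ∧ G.o r.2.2.2 ≠ G.t r.2.2.2

/-- Two rhomboids `(a, b, c, d)` and `(a', b', c', d')` are disjoint. -/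
def RhDisjoint (r r' : G.E × G.E × G.E × G.E) : Prop :=
  (r.1 ≠ r'.1 ∨ r.2.1 ≠ r'.2.1) ∧
  (r.1 ≠ r'.2.2.1 ∨ r.2.1 ≠ r'.2.2.2) ∧
  (r.2.2.1 ≠ r'.2.2.1 ∨ r.2.2.2 ≠ r'.2.2.2) ∧
  (r.2.2.1 ≠ r'.1 ∨ r.2.2.2 ≠ r'.2.1)

/-- `𝔯𝔥(G)`: the maximal cardinality of a family of pairwise disjoint rhomboids in `G`. -/
noncomputable def rhNum : ℕ :=
  sSup {n : ℕ | ∃ F : Finset (G.E × G.E × G.E × G.E),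
    (∀ r ∈ F, G.IsRhomboid r) ∧
    (∀ r ∈ F, ∀ r' ∈ F, r ≠ r' → G.RhDisjoint r r') ∧ F.card = n}

/-- `𝔏(G)`: the number of loops of `G`. -/
noncomputable def loopCount : ℕ :=
  Nat.card {e : G.E // G.o e = G.t e}

/-- `G` is quasi-acyclic: no directed cycle visiting two or more distinct vertices. -/
def QuasiAcyclic : Prop :=
  ∀ u v : G.V, u ≠ v →
    ∀ p q : List G.E, G.IsPath p u v → G.IsPath q v u → False

/-- `G` is 2-path-bounded: every oriented path avoiding loop edges has length at most 2. -/
def TwoPathBounded : Prop :=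
  ∀ (p : List G.E) (u v : G.V), G.IsPath p u v →
    (∀ e ∈ p, G.o e ≠ G.t e) → p.length ≤ 2

/-- `G` has a pair of multiple edges. -/
def HasMultipleEdges : Prop :=
  ∃ e e' : G.E, e ≠ e' ∧ G.t e = G.t e' ∧ G.o e = G.o e' ∧ G.t e ≠ G.o e

/-- `G` has a triangle. -/
def HasTriangle : Prop :=
  ∃ a b c : G.E, G.o a = G.o b ∧ G.t b = G.o c ∧ G.t c = G.t a ∧
    G.o a ≠ G.t a ∧ G.o b ≠ G.t b ∧ G.o c ≠ G.t c

/-- `G` has no loops. -/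
def NoLoops : Prop := ∀ e : G.E, G.o e ≠ G.t e

/-- Every edge occurring on either side of the relation `r` is a loop. -/
def AllLoops (r : List G.E × List G.E) : Prop :=
  (∀ e ∈ r.1, G.o e = G.t e) ∧ (∀ e ∈ r.2, G.o e = G.t e)

/-- Both sides of the relation `r` contain at least one non-loop edge. -/
def BothSidesNonLoop (r : List G.E × List G.E) : Prop :=
  (∃ e ∈ r.1, G.o e ≠ G.t e) ∧ (∃ e ∈ r.2, G.o e ≠ G.t e)

end OrientedGraph

/-- The triploid `T(n₁, n₂, n₃, n₀, e)`. -/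
def Triploid (n₁ n₂ n₃ n₀ e : ℕ) (hn₁ : 0 < n₁) (he : n₂ * (n₁ + n₃) ≤ e)
    (he₀ : 0 < e) : OrientedGraph where
  V := Fin n₀ ⊕ Fin n₁ ⊕ Fin n₂ ⊕ Fin n₃
  E := (Fin n₁ × Fin n₂) ⊕ (Fin n₂ × Fin n₃) ⊕ Fin (e - n₂ * (n₁ + n₃))
  nonemptyV := ⟨Sum.inr (Sum.inl ⟨0, hn₁⟩)⟩
  nonemptyE := by
    by_cases h : n₂ * (n₁ + n₃) < e
    · exact ⟨Sum.inr (Sum.inr ⟨0, by omega⟩)⟩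
    · have h2 : 0 < n₂ := by
        rcases Nat.eq_zero_or_pos n₂ with h0 | h0
        · exfalso; subst h0; simp at h; omega
        · exact h0
      exact ⟨Sum.inl (⟨0, hn₁⟩, ⟨0, h2⟩)⟩
  o := Sum.elim (fun p => Sum.inr (Sum.inl p.1))
        (Sum.elim (fun p => Sum.inr (Sum.inr (Sum.inl p.1)))
          (fun _ => Sum.inr (Sum.inl ⟨0, hn₁⟩)))
  t := Sum.elim (fun p => Sum.inr (Sum.inr (Sum.inl p.2)))
        (Sum.elim (fun p => Sum.inr (Sum.inr (Sum.inr p.2)))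
          (fun _ => Sum.inr (Sum.inl ⟨0, hn₁⟩)))

namespace OrientedGraph

open scoped Classical

variable (G : OrientedGraph)

/-! ### Basic lemmas about `labelProd` -/

lemma labelProd_nil {M : Type} [Monoid M] (l : G.E → M) : G.labelProd l [] = 1 := rfl

lemma labelProd_cons {M : Type} [Monoid M] (l : G.E → M) (e : G.E) (w : List G.E) :
    G.labelProd l (e :: w) = l e * G.labelProd l w := by
  simp [labelProd]

lemma labelProd_append' {M : Type} [Monoid M] (l : G.E → M) (u v : List G.E) :
    G.labelProd l (u ++ v) = G.labelProd l u * G.labelProd l v := by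
  simp [labelProd]

lemma labelProd_prod_mk {M N : Type} [Monoid M] [Monoid N] (l1 : G.E → M) (l2 : G.E → N)
    (w : List G.E) :
    G.labelProd (fun e => (l1 e, l2 e)) w = (G.labelProd l1 w, G.labelProd l2 w) := by
  induction w with
  | nil => rfl
  | cons e w ih => simp [labelProd_cons, ih, Prod.mk_mul_mk]

/-! ### The loop-free reduction of an edge sequence -/

/-- The sublist of non-loop edges. -/
noncomputable def red (w : List G.E) : List G.E :=
  w.filter fun e => decide (G.o e ≠ G.t e)

lemma red_nil : G.red [] = [] := rfl

lemma red_cons (e : G.E) (w : List G.E) :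
    G.red (e :: w) = if G.o e = G.t e then G.red w else e :: G.red w := by
  by_cases h : G.o e = G.t e <;> simp [red, List.filter_cons, h]

lemma mem_red_nonloop {e : G.E} {w : List G.E} (h : e ∈ G.red w) : G.o e ≠ G.t e := by
  simp [red, List.mem_filter] at h
  exact h.2

lemma labelProd_red {M : Type} [Monoid M] (l : G.E → M) (hl : ∀ e, G.o e = G.t e → l e = 1)
    (w : List G.E) : G.labelProd l w = G.labelProd l (G.red w) := by
  induction w with
  | nil => rfl
  | cons e w ih =>
    rw [red_cons, labelProd_cons]
    by_cases h : G.o e = G.t e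
    · rw [if_pos h, hl e h, one_mul, ih]
    · rw [if_neg h, labelProd_cons, ih]

/-! ### Basic lemmas about paths -/

lemma isPath_nil {u v : G.V} (h : G.IsPath [] u v) : u = v := by
  rcases h with ⟨-, h | ⟨h, -⟩⟩
  · exact h.2
  · exact absurd rfl h

lemma isPath_nil' (u : G.V) : G.IsPath [] u u := ⟨List.isChain_nil, Or.inl ⟨rfl, rfl⟩⟩

lemma isPath_cons {e : G.E} {p : List G.E} {u v : G.V} :
    G.IsPath (e :: p) u v ↔ u = G.o e ∧ G.IsPath p (G.t e) v := by
  constructor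
  · rintro ⟨hc, h⟩
    rcases h with ⟨h, -⟩ | ⟨h, hu, hv⟩
    · exact absurd h (List.cons_ne_nil _ _)
    refine ⟨by simpa using hu, ?_⟩
    cases p with
    | nil =>
      refine ⟨List.isChain_nil, Or.inl ⟨rfl, ?_⟩⟩
      simpa using hv.symm
    | cons f p' =>
      have hcc := List.isChain_cons_cons.mp hc
      refine ⟨hcc.2, Or.inr ⟨List.cons_ne_nil _ _, by simpa using hcc.1, ?_⟩⟩
      rw [hv, List.getLast_cons (List.cons_ne_nil _ _)]
  · rintro ⟨hu, hc, hrest⟩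
    refine ⟨?_, Or.inr ⟨List.cons_ne_nil _ _, by simpa using hu, ?_⟩⟩
    · rw [List.Chain', List.isChain_cons]
      refine ⟨?_, hc⟩
      intro b hb
      rcases hrest with ⟨rfl, -⟩ | ⟨hne, hu', -⟩
      · simp at hb
      · have hh : p.head? = some (p.head hne) := List.head?_eq_head hne
        rw [hh] at hb
        rw [← Option.some.inj hb]
        exact hu'
    · rcases hrest with ⟨rfl, huv⟩ | ⟨hne, -, hv⟩
      · simpa using huv.symm
      · rw [hv, List.getLast_cons hne]

lemma isPath_single (e : G.E) : G.IsPath [e] (G.o e) (G.t e) :=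
  G.isPath_cons.mpr ⟨rfl, G.isPath_nil' _⟩

lemma isPath_pair {e f : G.E} (h : G.t e = G.o f) : G.IsPath [e, f] (G.o e) (G.t f) :=
  G.isPath_cons.mpr ⟨rfl, G.isPath_cons.mpr ⟨h, G.isPath_nil' _⟩⟩

lemma isPath_red {p : List G.E} {u v : G.V} (hp : G.IsPath p u v) :
    G.IsPath (G.red p) u v := by
  induction p generalizing u with
  | nil => simpa [red] using hp
  | cons e p ih =>
    rw [isPath_cons] at hp
    obtain ⟨hu, hp⟩ := hp
    rw [red_cons]
    by_cases h : G.o e = G.t e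
    · rw [if_pos h]
      have := ih hp
      rwa [hu, h]
    · rw [if_neg h]
      exact G.isPath_cons.mpr ⟨hu, ih hp⟩

/-- No oriented loop-free 3-paths in a 2-path-bounded graph. -/
lemma no3 (hpb : G.TwoPathBounded) {e f g : G.E} (h1 : G.t e = G.o f) (h2 : G.t f = G.o g)
    (he : G.o e ≠ G.t e) (hf : G.o f ≠ G.t f) (hg : G.o g ≠ G.t g) : False := by
  have hp : G.IsPath [e, f, g] (G.o e) (G.t g) :=
    G.isPath_cons.mpr ⟨rfl, G.isPath_cons.mpr ⟨h1, G.isPath_cons.mpr ⟨h2, G.isPath_nil' _⟩⟩⟩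
  have hlen := hpb _ _ _ hp ?_
  · simp at hlen
  · intro x hx
    simp at hx
    rcases hx with rfl | rfl | rfl <;> assumption

/-! ### A criterion for commutativity -/

lemma comm_crit {M : Type} [Monoid M]
    (hqa : G.QuasiAcyclic) (hpb : G.TwoPathBounded)
    (hme : ¬ G.HasMultipleEdges) (htr : ¬ G.HasTriangle)
    (l : G.E → M) (hl1 : ∀ e, G.o e = G.t e → l e = 1)
    (hl2 : ∀ e f e' f', G.o e = G.o e' → G.t e = G.o f → G.t e' = G.o f' → G.t f = G.t f' →
      G.o e ≠ G.t e → G.o f ≠ G.t f → G.o e' ≠ G.t e' → G.o f' ≠ G.t f' →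
      l e * l f = l e' * l f') : G.IsCommutative l := by
  intro u v p q hp hq
  rw [G.labelProd_red l hl1 p, G.labelProd_red l hl1 q]
  have hp' := G.isPath_red hp
  have hq' := G.isPath_red hq
  have hlp : (G.red p).length ≤ 2 := hpb _ _ _ hp' (fun e he => G.mem_red_nonloop he)
  have hlq : (G.red q).length ≤ 2 := hpb _ _ _ hq' (fun e he => G.mem_red_nonloop he)
  have hnp : ∀ e ∈ G.red p, G.o e ≠ G.t e := fun e he => G.mem_red_nonloop he
  have hnq : ∀ e ∈ G.red q, G.o e ≠ G.t e := fun e he => G.mem_red_nonloop he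
  clear hp hq
  set P := G.red p with hP
  set Q := G.red q with hQ
  clear_value P Q
  clear hP hQ
  rcases P with _ | ⟨e, _ | ⟨f, _ | ⟨g, P⟩⟩⟩
  · -- P = []
    have huv := G.isPath_nil hp'
    rcases Q with _ | ⟨e', _ | ⟨f', _ | ⟨g', Q⟩⟩⟩
    · rfl
    · -- one edge cycle: contradiction with nonloop
      exfalso
      rw [isPath_cons] at hq'
      obtain ⟨hu, hq'⟩ := hq'
      have hv := G.isPath_nil hq'
      exact hnq e' (by simp) (by rw [← hu, huv, hv])
    · -- two edge cycle: contradiction with quasi-acyclicity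
      exfalso
      rw [isPath_cons] at hq'
      obtain ⟨hu, hq'⟩ := hq'
      rw [isPath_cons] at hq'
      obtain ⟨hef, hq'⟩ := hq'
      have hv := G.isPath_nil hq'
      have hne : u ≠ G.t e' := by
        rw [hu]; exact hnq e' (by simp)
      have path1 : G.IsPath [e'] u (G.t e') := G.isPath_cons.mpr ⟨hu, G.isPath_nil' _⟩
      have path2 : G.IsPath [f'] (G.t e') u :=
        G.isPath_cons.mpr ⟨hef, ⟨List.isChain_nil, Or.inl ⟨rfl, by rw [hv, huv]⟩⟩⟩
      exact hqa u (G.t e') hne [e'] [f'] path1 path2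
    · exfalso; simp at hlq
  · -- P = [e]
    rw [isPath_cons] at hp'
    obtain ⟨hu, hp'⟩ := hp'
    have hv := G.isPath_nil hp'
    rcases Q with _ | ⟨e', _ | ⟨f', _ | ⟨g', Q⟩⟩⟩
    · -- one edge cycle
      exfalso
      have huv := G.isPath_nil hq'
      exact hnp e (by simp) (by rw [← hu, huv, hv])
    · -- single vs single : multiple edges unless equal
      rw [isPath_cons] at hq'
      obtain ⟨hu', hq'⟩ := hq'
      have hv' := G.isPath_nil hq'
      by_cases hee : e = e'
      · rw [hee]
      · exfalso
        exact hme ⟨e, e', hee, by rw [hv, hv'], by rw [← hu, ← hu'],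
          fun h => hnp e (by simp) h.symm⟩
    · -- single vs pair : triangle
      exfalso
      rw [isPath_cons] at hq'
      obtain ⟨hu', hq'⟩ := hq'
      rw [isPath_cons] at hq'
      obtain ⟨hef, hq'⟩ := hq'
      have hv' := G.isPath_nil hq'
      exact htr ⟨e, e', f', by rw [← hu, hu'], hef, by rw [hv', hv],
        hnp e (by simp), hnq e' (by simp), hnq f' (by simp)⟩
    · exfalso; simp at hlq
  · -- P = [e, f]
    rw [isPath_cons] at hp'
    obtain ⟨hu, hp'⟩ := hp'
    rw [isPath_cons] at hp'
    obtain ⟨hef, hp'⟩ := hp'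
    have hv := G.isPath_nil hp'
    rcases Q with _ | ⟨e', _ | ⟨f', _ | ⟨g', Q⟩⟩⟩
    · -- two edge cycle
      exfalso
      have huv := G.isPath_nil hq'
      have hne : u ≠ G.t e := by
        rw [hu]; exact hnp e (by simp)
      have path1 : G.IsPath [e] u (G.t e) := G.isPath_cons.mpr ⟨hu, G.isPath_nil' _⟩
      have path2 : G.IsPath [f] (G.t e) u :=
        G.isPath_cons.mpr ⟨hef, ⟨List.isChain_nil, Or.inl ⟨rfl, by rw [hv, huv]⟩⟩⟩
      exact hqa u (G.t e) hne [e] [f] path1 path2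
    · -- pair vs single : triangle
      exfalso
      rw [isPath_cons] at hq'
      obtain ⟨hu', hq'⟩ := hq'
      have hv' := G.isPath_nil hq'
      exact htr ⟨e', e, f, by rw [← hu', hu], hef, by rw [hv, hv'],
        hnq e' (by simp), hnp e (by simp), hnp f (by simp)⟩
    · -- pair vs pair : use hl2
      rw [isPath_cons] at hq'
      obtain ⟨hu', hq'⟩ := hq'
      rw [isPath_cons] at hq'
      obtain ⟨hef', hq'⟩ := hq'
      have hv' := G.isPath_nil hq'
      have := hl2 e f e' f' (by rw [← hu, hu']) hef hef' (by rw [hv, hv'])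
        (hnp e (by simp)) (hnp f (by simp)) (hnq e' (by simp)) (hnq f' (by simp))
      simpa [labelProd] using this
    · exfalso; simp at hlq
  · exfalso; simp at hlp

end OrientedGraph

namespace OrientedGraph

open scoped Classical

variable (G : OrientedGraph)

/-! ### Matrix labelings detecting adjacencies -/

/-- 3×3 transfer matrix counting loop-separated occurrences of the pattern `x, y`. -/
noncomputable def mat3 (x y e : G.E) : Matrix (Fin 3) (Fin 3) ℕ :=
  ![![1, if e = x then 1 else 0, 0],
    ![0, if G.o e = G.t e then 1 else 0, if e = y then 1 else 0],
    ![0, 0, 1]]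

/-- The product of the transfer matrices along `w`. -/
noncomputable def P3 (x y : G.E) (w : List G.E) : Matrix (Fin 3) (Fin 3) ℕ :=
  G.labelProd (G.mat3 x y) w

lemma P3_nil (x y : G.E) : G.P3 x y [] = 1 := rfl

lemma P3_cons (x y e : G.E) (w : List G.E) :
    G.P3 x y (e :: w) = G.mat3 x y e * G.P3 x y w := by
  simp [P3, labelProd]

lemma P3_desc (x y : G.E) (hx : G.o x ≠ G.t x) (hy : G.o y ≠ G.t y) (w : List G.E) :
    G.P3 x y w 0 0 = 1 ∧ G.P3 x y w 2 2 = 1 ∧ G.P3 x y w 1 0 = 0 ∧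
    G.P3 x y w 2 0 = 0 ∧ G.P3 x y w 2 1 = 0 ∧
    G.P3 x y w 1 1 = (if G.red w = [] then 1 else 0) ∧
    G.P3 x y w 0 1 = (if (G.red w).getLast? = some x then 1 else 0) ∧
    G.P3 x y w 1 2 = (if (G.red w).head? = some y then 1 else 0) := by
  induction w with
  | nil => simp [P3_nil, Matrix.one_apply, red_nil]
  | cons e w ih =>
    obtain ⟨i1, i2, i3, i4, i5, i6, i7, i8⟩ := ih
    rw [P3_cons, red_cons]
    by_cases hl : G.o e = G.t e
    · have hex : e ≠ x := fun h => hx (h ▸ hl)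
      have hey : e ≠ y := fun h => hy (h ▸ hl)
      rw [if_pos hl]
      refine ⟨?_, ?_, ?_, ?_, ?_, ?_, ?_, ?_⟩ <;>
        simp only [Matrix.mul_apply] <;> simp [Matrix.mul_apply, Fin.sum_univ_three, mat3, i1, i2, i3, i4, i5, i6, i7, i8,
          hl, hex, hey]
    · rw [if_neg hl]
      refine ⟨?_, ?_, ?_, ?_, ?_, ?_, ?_, ?_⟩
      · simp only [Matrix.mul_apply] <;> simp [Matrix.mul_apply, Fin.sum_univ_three, mat3, i1, i3, i4, hl]
      · simp only [Matrix.mul_apply] <;> simp [Matrix.mul_apply, Fin.sum_univ_three, mat3, i2, i4, i5, hl]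
      · simp only [Matrix.mul_apply] <;> simp [Matrix.mul_apply, Fin.sum_univ_three, mat3, i1, i3, i4, hl]
      · simp only [Matrix.mul_apply] <;> simp [Matrix.mul_apply, Fin.sum_univ_three, mat3, i1, i3, i4, hl]
      · simp only [Matrix.mul_apply] <;> simp [Matrix.mul_apply, Fin.sum_univ_three, mat3, i2, i4, i5, hl]
      · simp only [Matrix.mul_apply] <;> simp [Matrix.mul_apply, Fin.sum_univ_three, mat3, i3, i4, i5, i6, hl]
      · -- entry (0,1)
        by_cases hw : G.red w = []
        · simp only [Matrix.mul_apply] <;> simp [Matrix.mul_apply, Fin.sum_univ_three, mat3, i3, i6, i7, hl, hw]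
        · obtain ⟨f, t', hft⟩ := List.exists_cons_of_ne_nil hw
          rw [hft, List.getLast?_cons_cons]
          simp only [Matrix.mul_apply] <;> simp [Matrix.mul_apply, Fin.sum_univ_three, mat3, i3, i6, i7, hl, hw, hft]
      · simp only [Matrix.mul_apply] <;> simp [Matrix.mul_apply, Fin.sum_univ_three, mat3, i1, i2, i4, i5, i8, hl]

lemma P3_append (x y : G.E) (hx : G.o x ≠ G.t x) (hy : G.o y ≠ G.t y) (u v : List G.E) :
    G.P3 x y (u ++ v) 0 2 =
      G.P3 x y u 0 2 + G.P3 x y v 0 2 + G.P3 x y u 0 1 * G.P3 x y v 1 2 := by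
  have hm : G.P3 x y (u ++ v) = G.P3 x y u * G.P3 x y v := by
    simp [P3, labelProd]
  obtain ⟨a1, -, -, -, -, -, -, -⟩ := G.P3_desc x y hx hy u
  obtain ⟨-, b2, -, -, -, -, -, -⟩ := G.P3_desc x y hx hy v
  rw [hm, Matrix.mul_apply, Fin.sum_univ_three, a1, b2]
  ring

/-- 2×2 transfer matrix: the `(0,1)` entry of the product records whether the last
non-loop edge is `x`; the `(1,1)` entry records whether all edges are loops. -/
noncomputable def mat2L (x e : G.E) : Matrix (Fin 2) (Fin 2) ℕ :=
  ![![1, if e = x then 1 else 0],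
    ![0, if G.o e = G.t e then 1 else 0]]

/-- 2×2 transfer matrix: the `(0,1)` entry of the product records whether the first
non-loop edge is `y`. -/
noncomputable def mat2R (y e : G.E) : Matrix (Fin 2) (Fin 2) ℕ :=
  ![![if G.o e = G.t e then 1 else 0, if e = y then 1 else 0],
    ![0, 1]]

lemma P2L_desc (x : G.E) (hx : G.o x ≠ G.t x) (w : List G.E) :
    G.labelProd (G.mat2L x) w 0 0 = 1 ∧ G.labelProd (G.mat2L x) w 1 0 = 0 ∧
    G.labelProd (G.mat2L x) w 1 1 = (if G.red w = [] then 1 else 0) ∧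
    G.labelProd (G.mat2L x) w 0 1 = (if (G.red w).getLast? = some x then 1 else 0) := by
  induction w with
  | nil => simp [labelProd_nil, Matrix.one_apply, red_nil]
  | cons e w ih =>
    obtain ⟨i1, i2, i3, i4⟩ := ih
    rw [labelProd_cons, red_cons]
    by_cases hl : G.o e = G.t e
    · have hex : e ≠ x := fun h => hx (h ▸ hl)
      refine ⟨?_, ?_, ?_, ?_⟩ <;>
        simp only [Matrix.mul_apply] <;> simp [Matrix.mul_apply, Fin.sum_univ_two, mat2L, i1, i2, i3, i4, hl, hex]
    · refine ⟨?_, ?_, ?_, ?_⟩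
      · simp only [Matrix.mul_apply] <;> simp [Matrix.mul_apply, Fin.sum_univ_two, mat2L, i1, i2, hl]
      · simp only [Matrix.mul_apply] <;> simp [Matrix.mul_apply, Fin.sum_univ_two, mat2L, i2, hl]
      · simp only [Matrix.mul_apply] <;> simp [Matrix.mul_apply, Fin.sum_univ_two, mat2L, i2, i3, hl]
      · rw [if_neg hl]
        by_cases hw : G.red w = []
        · simp only [Matrix.mul_apply] <;> simp [Matrix.mul_apply, Fin.sum_univ_two, mat2L, i3, i4, hl, hw]
        · obtain ⟨f, t', hft⟩ := List.exists_cons_of_ne_nil hw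
          rw [hft, List.getLast?_cons_cons]
          simp only [Matrix.mul_apply] <;> simp [Matrix.mul_apply, Fin.sum_univ_two, mat2L, i3, i4, hl, hw, hft]

lemma P2R_desc (y : G.E) (hy : G.o y ≠ G.t y) (w : List G.E) :
    G.labelProd (G.mat2R y) w 1 1 = 1 ∧ G.labelProd (G.mat2R y) w 1 0 = 0 ∧
    G.labelProd (G.mat2R y) w 0 0 = (if G.red w = [] then 1 else 0) ∧
    G.labelProd (G.mat2R y) w 0 1 = (if (G.red w).head? = some y then 1 else 0) := by
  induction w with
  | nil => simp [labelProd_nil, Matrix.one_apply, red_nil]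
  | cons e w ih =>
    obtain ⟨i1, i2, i3, i4⟩ := ih
    rw [labelProd_cons, red_cons]
    by_cases hl : G.o e = G.t e
    · have hey : e ≠ y := fun h => hy (h ▸ hl)
      refine ⟨?_, ?_, ?_, ?_⟩ <;>
        simp only [Matrix.mul_apply] <;> simp [Matrix.mul_apply, Fin.sum_univ_two, mat2R, i1, i2, i3, i4, hl, hey]
    · refine ⟨?_, ?_, ?_, ?_⟩
      · simp only [Matrix.mul_apply] <;> simp [Matrix.mul_apply, Fin.sum_univ_two, mat2R, i1, i2, hl]
      · simp only [Matrix.mul_apply] <;> simp [Matrix.mul_apply, Fin.sum_univ_two, mat2R, i2, hl]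
      · simp only [Matrix.mul_apply] <;> simp [Matrix.mul_apply, Fin.sum_univ_two, mat2R, i2, i3, hl]
      · simp only [Matrix.mul_apply] <;> simp [Matrix.mul_apply, Fin.sum_univ_two, mat2R, i1, i2, i4, hl]

/-- The labeling `mat2L x` is commutative whenever `x` starts a loop-free 2-path. -/
lemma mat2L_comm (hqa : G.QuasiAcyclic) (hpb : G.TwoPathBounded)
    (hme : ¬ G.HasMultipleEdges) (htr : ¬ G.HasTriangle)
    (x x₂ : G.E) (hx : G.o x ≠ G.t x) (hx₂ : G.o x₂ ≠ G.t x₂) (hch : G.t x = G.o x₂) :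
    G.IsCommutative (G.mat2L x) := by
  have hprod : ∀ p q : G.E, G.o p ≠ G.t p → G.o q ≠ G.t q → q ≠ x →
      G.mat2L x p * G.mat2L x q = ![![1, 0], ![0, 0]] := by
    intro p q hp hq hqx
    ext i j
    fin_cases i <;> fin_cases j <;>
      simp only [Matrix.mul_apply] <;> simp [mat2L, Matrix.mul_apply, Fin.sum_univ_two, hp, hq, hqx]
  apply G.comm_crit hqa hpb hme htr
  · intro e he
    have hex : e ≠ x := fun h => hx (h ▸ he)
    ext i j
    fin_cases i <;> fin_cases j <;> simp [mat2L, hex, he, Matrix.one_apply]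
  · intro e f e' f' c1 c2 c3 c4 ne nf ne' nf'
    have hfx : f ≠ x := by
      rintro rfl
      exact G.no3 hpb c2 hch ne hx hx₂
    have hfx' : f' ≠ x := by
      rintro rfl
      exact G.no3 hpb c3 hch ne' hx hx₂
    rw [hprod e f ne nf hfx, hprod e' f' ne' nf' hfx']

/-- The labeling `mat2R y` is commutative whenever `y` ends a loop-free 2-path. -/
lemma mat2R_comm (hqa : G.QuasiAcyclic) (hpb : G.TwoPathBounded)
    (hme : ¬ G.HasMultipleEdges) (htr : ¬ G.HasTriangle)
    (y₀ y : G.E) (hy₀ : G.o y₀ ≠ G.t y₀) (hy : G.o y ≠ G.t y) (hch : G.t y₀ = G.o y) :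
    G.IsCommutative (G.mat2R y) := by
  have hprod : ∀ p q : G.E, G.o p ≠ G.t p → G.o q ≠ G.t q → p ≠ y →
      G.mat2R y p * G.mat2R y q = ![![0, 0], ![0, 1]] := by
    intro p q hp hq hpy
    ext i j
    fin_cases i <;> fin_cases j <;>
      simp only [Matrix.mul_apply] <;> simp [mat2R, Matrix.mul_apply, Fin.sum_univ_two, hp, hq, hpy]
  apply G.comm_crit hqa hpb hme htr
  · intro e he
    have hey : e ≠ y := fun h => hy (h ▸ he)
    ext i j
    fin_cases i <;> fin_cases j <;> simp [mat2R, hey, he, Matrix.one_apply]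
  · intro e f e' f' c1 c2 c3 c4 ne nf ne' nf'
    have hey : e ≠ y := by
      rintro rfl
      exact G.no3 hpb hch c2 hy₀ hy nf
    have hey' : e' ≠ y := by
      rintro rfl
      exact G.no3 hpb hch c3 hy₀ hy nf'
    rw [hprod e f ne nf hey, hprod e' f' ne' nf' hey']

end OrientedGraph

namespace OrientedGraph

open scoped Classical

variable (G : OrientedGraph)

/-- Key lemma: any complete system of relations must contain a sequence in which the
pair `(a, b)` or the pair `(c, d)` of a rhomboid occurs as a loop-separated adjacency. -/
lemma key (hqa : G.QuasiAcyclic) (hpb : G.TwoPathBounded)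
    (hme : ¬ G.HasMultipleEdges) (htr : ¬ G.HasTriangle)
    (R : Finset (List G.E × List G.E)) (hR : G.IsComplete R)
    (a b c d : G.E)
    (h1 : G.o a = G.o c) (h2 : G.t b = G.t d) (h3 : G.t a = G.o b) (h4 : G.t c = G.o d)
    (h5 : G.o a ≠ G.t a) (h6 : G.o a ≠ G.o d) (h7 : G.o a ≠ G.t d) (h8 : G.t a ≠ G.o d)
    (h9 : G.t a ≠ G.t d) (h10 : G.o d ≠ G.t d) :
    ∃ w ∈ G.relSet R, G.P3 a b w 0 2 ≠ 0 ∨ G.P3 c d w 0 2 ≠ 0 := by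
  have hb : G.o b ≠ G.t b := by rw [← h3, h2]; exact h9
  have hc : G.o c ≠ G.t c := by rw [← h1, h4]; exact h6
  have hca : c ≠ a := fun h => h8 (by rw [← h]; exact h4)
  by_contra hcon
  push_neg at hcon
  set L : G.E → Matrix (Fin 3) (Fin 3) ℕ × Matrix (Fin 3) (Fin 3) ℕ :=
    fun e => (G.mat3 a b e, G.mat3 c d e) with hL
  have hnc : ¬ G.IsCommutative L := by
    intro hC
    have hp1 : G.IsPath [a, b] (G.o a) (G.t b) := G.isPath_pair h3
    have hp2 : G.IsPath [c, d] (G.o a) (G.t b) := by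
      have := G.isPath_pair h4
      rwa [← h1, ← h2] at this
    have heq := hC _ _ _ _ hp1 hp2
    rw [hL, G.labelProd_prod_mk, G.labelProd_prod_mk] at heq
    have h02 := congrArg (fun m => m.1 0 2) heq
    simp only at h02
    have lhs1 : G.labelProd (fun e => G.mat3 a b e) [a, b] 0 2 = 1 := by
      rw [labelProd_cons, labelProd_cons, labelProd_nil, mul_one]
      simp only [Matrix.mul_apply]; simp [mat3, Matrix.mul_apply, Fin.sum_univ_three]
    have rhs1 : G.labelProd (fun e => G.mat3 a b e) [c, d] 0 2 = 0 := by
      rw [labelProd_cons, labelProd_cons, labelProd_nil, mul_one]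
      simp only [Matrix.mul_apply]; simp [mat3, Matrix.mul_apply, Fin.sum_univ_three, hca]
    rw [lhs1, rhs1] at h02
    exact one_ne_zero h02
  have hAll : ¬ ∀ r ∈ R, G.labelProd L r.1 = G.labelProd L r.2 :=
    fun h => hnc ((hR _ L).mpr h)
  push_neg at hAll
  obtain ⟨r, hrR, hner⟩ := hAll
  have hm1 : r.1 ∈ G.relSet R := ⟨r, hrR, Or.inl rfl⟩
  have hm2 : r.2 ∈ G.relSet R := ⟨r, hrR, Or.inr rfl⟩
  have hCa := G.mat2L_comm hqa hpb hme htr a b h5 hb h3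
  have hCc := G.mat2L_comm hqa hpb hme htr c d hc h10 h4
  have hCb := G.mat2R_comm hqa hpb hme htr a b h5 hb h3
  have hCd := G.mat2R_comm hqa hpb hme htr c d hc h10 h4
  have hea := (hR _ (G.mat2L a)).mp hCa r hrR
  have hec := (hR _ (G.mat2L c)).mp hCc r hrR
  have heb := (hR _ (G.mat2R b)).mp hCb r hrR
  have hed := (hR _ (G.mat2R d)).mp hCd r hrR
  obtain ⟨La1, La2, La3, La4⟩ := G.P2L_desc a h5 r.1
  obtain ⟨La1', La2', La3', La4'⟩ := G.P2L_desc a h5 r.2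
  obtain ⟨Lc1, Lc2, Lc3, Lc4⟩ := G.P2L_desc c hc r.1
  obtain ⟨Lc1', Lc2', Lc3', Lc4'⟩ := G.P2L_desc c hc r.2
  obtain ⟨Rb1, Rb2, Rb3, Rb4⟩ := G.P2R_desc b hb r.1
  obtain ⟨Rb1', Rb2', Rb3', Rb4'⟩ := G.P2R_desc b hb r.2
  obtain ⟨Rd1, Rd2, Rd3, Rd4⟩ := G.P2R_desc d h10 r.1
  obtain ⟨Rd1', Rd2', Rd3', Rd4'⟩ := G.P2R_desc d h10 r.2
  have Ea : (if (G.red r.1).getLast? = some a then (1 : ℕ) else 0) =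
      (if (G.red r.2).getLast? = some a then 1 else 0) := by
    rw [← La4, ← La4', hea]
  have Ec : (if (G.red r.1).getLast? = some c then (1 : ℕ) else 0) =
      (if (G.red r.2).getLast? = some c then 1 else 0) := by
    rw [← Lc4, ← Lc4', hec]
  have Eb : (if (G.red r.1).head? = some b then (1 : ℕ) else 0) =
      (if (G.red r.2).head? = some b then 1 else 0) := by
    rw [← Rb4, ← Rb4', heb]
  have Ed : (if (G.red r.1).head? = some d then (1 : ℕ) else 0) =
      (if (G.red r.2).head? = some d then 1 else 0) := by
    rw [← Rd4, ← Rd4', hed]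
  have El : (if G.red r.1 = [] then (1 : ℕ) else 0) =
      (if G.red r.2 = [] then 1 else 0) := by
    rw [← La3, ← La3', hea]
  have hz1 := hcon r.1 hm1
  have hz2 := hcon r.2 hm2
  obtain ⟨A1, A2, A3, A4, A5, A6, A7, A8⟩ := G.P3_desc a b h5 hb r.1
  obtain ⟨B1, B2, B3, B4, B5, B6, B7, B8⟩ := G.P3_desc a b h5 hb r.2
  obtain ⟨C1, C2, C3, C4, C5, C6, C7, C8⟩ := G.P3_desc c d hc h10 r.1
  obtain ⟨D1, D2, D3, D4, D5, D6, D7, D8⟩ := G.P3_desc c d hc h10 r.2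
  have comp1 : G.P3 a b r.1 = G.P3 a b r.2 := by
    rw [Matrix.eta_fin_three (G.P3 a b r.1), Matrix.eta_fin_three (G.P3 a b r.2)]
    rw [A1, A2, A3, A4, A5, A6, A7, A8, B1, B2, B3, B4, B5, B6, B7, B8,
      hz1.1, hz2.1, Ea, Eb, El]
  have comp2 : G.P3 c d r.1 = G.P3 c d r.2 := by
    rw [Matrix.eta_fin_three (G.P3 c d r.1), Matrix.eta_fin_three (G.P3 c d r.2)]
    rw [C1, C2, C3, C4, C5, C6, C7, C8, D1, D2, D3, D4, D5, D6, D7, D8,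
      hz1.2, hz2.2, Ec, Ed, El]
  apply hner
  rw [hL, G.labelProd_prod_mk, G.labelProd_prod_mk]
  exact Prod.ext comp1 comp2

/-! ### Counting loop-separated adjacencies -/

/-- The set of loop-separated adjacent pairs of non-loop edges occurring in `S`. -/
noncomputable def adjSet (S : Set (List G.E)) : Finset (G.E × G.E) :=
  Finset.univ.filter fun z =>
    G.o z.1 ≠ G.t z.1 ∧ G.o z.2 ≠ G.t z.2 ∧ ∃ w ∈ S, G.P3 z.1 z.2 w 0 2 ≠ 0

lemma mem_adjSet {S : Set (List G.E)} {z : G.E × G.E} :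
    z ∈ G.adjSet S ↔
      G.o z.1 ≠ G.t z.1 ∧ G.o z.2 ≠ G.t z.2 ∧ ∃ w ∈ S, G.P3 z.1 z.2 w 0 2 ≠ 0 := by
  simp [adjSet]

lemma adjSet_base : G.adjSet G.baseSet = ∅ := by
  ext z
  simp only [Finset.notMem_empty, iff_false]
  rw [mem_adjSet]
  rintro ⟨hx, hy, w, hw, hne⟩
  simp only [baseSet, Set.mem_setOf_eq] at hw
  rcases hw with rfl | ⟨e, rfl⟩
  · exact hne (by simp [P3_nil, Matrix.one_apply])
  · apply hne
    rw [show G.P3 z.1 z.2 [e] = G.mat3 z.1 z.2 e by rw [P3_cons, P3_nil, mul_one]]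
    simp [mat3]

lemma adjSet_step {S S' : Set (List G.E)} (h : G.MulStep S S') :
    (G.adjSet S').card ≤ (G.adjSet S).card + 1 := by
  obtain ⟨u, hu, v, hv, rfl⟩ := h
  have hsub : G.adjSet (S ∪ {u ++ v}) ⊆ insert
      (((G.red u).getLast?).getD (Classical.arbitrary G.E),
       ((G.red v).head?).getD (Classical.arbitrary G.E)) (G.adjSet S) := by
    intro z hz
    rw [G.mem_adjSet] at hz
    obtain ⟨hx, hy, w, hw, hne⟩ := hz
    rcases hw with hw | hw
    · exact Finset.mem_insert_of_mem (G.mem_adjSet.mpr ⟨hx, hy, w, hw, hne⟩)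
    · rw [Set.mem_singleton_iff] at hw
      subst hw
      rw [G.P3_append z.1 z.2 hx hy u v] at hne
      by_cases hu1 : G.P3 z.1 z.2 u 0 2 = 0
      · by_cases hv1 : G.P3 z.1 z.2 v 0 2 = 0
        · rw [hu1, hv1] at hne
          simp only [zero_add] at hne
          rw [Nat.mul_ne_zero_iff] at hne
          obtain ⟨A, B⟩ := hne
          obtain ⟨-, -, -, -, -, -, A7, -⟩ := G.P3_desc z.1 z.2 hx hy u
          obtain ⟨-, -, -, -, -, -, -, B8⟩ := G.P3_desc z.1 z.2 hx hy v
          rw [A7] at A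
          rw [B8] at B
          have hgl : (G.red u).getLast? = some z.1 := by
            by_contra hgl; rw [if_neg hgl] at A; exact A rfl
          have hhd : (G.red v).head? = some z.2 := by
            by_contra hhd; rw [if_neg hhd] at B; exact B rfl
          refine Finset.mem_insert.mpr (Or.inl ?_)
          exact Prod.ext (by rw [hgl, Option.getD_some]) (by rw [hhd, Option.getD_some])
        · exact Finset.mem_insert_of_mem (G.mem_adjSet.mpr ⟨hx, hy, v, hv, hv1⟩)
      · exact Finset.mem_insert_of_mem (G.mem_adjSet.mpr ⟨hx, hy, u, hu, hu1⟩)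
  calc (G.adjSet (S ∪ {u ++ v})).card ≤ _ := Finset.card_le_card hsub
    _ ≤ (G.adjSet S).card + 1 := Finset.card_insert_le _ _

end OrientedGraph

/-- Theorem: if `G` is quasi-acyclic, 2-path-bounded, without multiple edges and
triangles, then `ν(G) ≥ 𝔯𝔥(G)`. -/
theorem nu_ge_rhNum (G : OrientedGraph) (hqa : G.QuasiAcyclic)
    (hpb : G.TwoPathBounded) (hme : ¬ G.HasMultipleEdges) (htr : ¬ G.HasTriangle) :
    (G.rhNum : ℕ∞) ≤ G.nu := by
  classical
  refine le_sInf ?_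
  rintro k ⟨R, hcomp, rfl⟩
  refine le_sInf ?_
  rintro k ⟨S, hsub, rfl⟩
  refine le_sInf ?_
  rintro k ⟨n, rfl, f, h0, hn, hstep⟩
  rw [Nat.cast_le]
  have hbound : ∀ i ≤ n, (G.adjSet (f i)).card ≤ i := by
    intro i
    induction i with
    | zero => intro _; rw [h0, G.adjSet_base]; simp
    | succ i ih =>
      intro hin
      have hstepi := G.adjSet_step (hstep i (by omega))
      have := ih (by omega)
      omega
  refine csSup_le ⟨0, ∅, by simp, by simp, by simp⟩ ?_
  rintro m ⟨F, hFrh, hFdisj, rfl⟩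
  have hmem : ∀ r ∈ F,
      ((r.1, r.2.1) ∈ G.adjSet S ∨ (r.2.2.1, r.2.2.2) ∈ G.adjSet S) := by
    intro r hr
    obtain ⟨h1, h2, h3, h4, h5, h6, h7, h8, h9, h10⟩ := hFrh r hr
    have hb : G.o r.2.1 ≠ G.t r.2.1 := by rw [← h3, h2]; exact h9
    have hc : G.o r.2.2.1 ≠ G.t r.2.2.1 := by rw [← h1, h4]; exact h6
    obtain ⟨w, hw, hor⟩ := G.key hqa hpb hme htr R hcomp r.1 r.2.1 r.2.2.1 r.2.2.2
      h1 h2 h3 h4 h5 h6 h7 h8 h9 h10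
    rcases hor with hor | hor
    · exact Or.inl (G.mem_adjSet.mpr ⟨h5, hb, w, hsub hw, hor⟩)
    · exact Or.inr (G.mem_adjSet.mpr ⟨hc, h10, w, hsub hw, hor⟩)
  have hcard : F.card ≤ (G.adjSet S).card := by
    apply Finset.card_le_card_of_injOn
      (fun r => if (r.1, r.2.1) ∈ G.adjSet S then (r.1, r.2.1) else (r.2.2.1, r.2.2.2))
    · intro r hr
      by_cases hA : (r.1, r.2.1) ∈ G.adjSet S
      · beta_reduce; rw [if_pos hA]; exact hA
      · rcases hmem r hr with h | h
        · exact absurd h hA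
        · beta_reduce; rw [if_neg hA]; exact h
    · intro r hr r' hr' heq
      simp only at heq
      by_contra hne
      obtain ⟨c1, c2, c3, c4⟩ :=
        hFdisj r (Finset.mem_coe.mp hr) r' (Finset.mem_coe.mp hr') hne
      by_cases hA : (r.1, r.2.1) ∈ G.adjSet S <;>
        by_cases hB : (r'.1, r'.2.1) ∈ G.adjSet S
      · rw [if_pos hA, if_pos hB, Prod.mk.injEq] at heq
        rcases c1 with c | c
        · exact c heq.1
        · exact c heq.2
      · rw [if_pos hA, if_neg hB, Prod.mk.injEq] at heq
        rcases c2 with c | c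
        · exact c heq.1
        · exact c heq.2
      · rw [if_neg hA, if_pos hB, Prod.mk.injEq] at heq
        rcases c4 with c | c
        · exact c heq.1
        · exact c heq.2
      · rw [if_neg hA, if_neg hB, Prod.mk.injEq] at heq
        rcases c3 with c | c
        · exact c heq.1
        · exact c heq.2
  calc F.card ≤ (G.adjSet S).card := hcard
    _ = (G.adjSet (f n)).card := by rw [hn]
    _ ≤ n := hbound n le_rfl
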